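/- The function h(s) = G⁻¹(s)/g(G⁻¹(s)) is differentiable on ℝ with h'(s) = (1 − G⁻¹(s) g'(G⁻¹(s))/g(G⁻¹(s))) / g(G⁻¹(s))² > 0, so h is strictly increasing; moreover, for every C > 0 there exists η > 0 such that (h(a) − h(b))(a − b) ≥ η (a − b)² whenever |a| ≤ C and |b| ≤ C. -/

import Mathlib

open Real Filter Set

/-- The constant α = (9+3√5)/2. -/
noncomputable def alph : ℝ := (9 + 3 * Real.sqrt 5) / 2

/-- The constant β = 2 α^{3/2} √(α−1). -/
noncomputable def bet : ℝ := 2 * alph ^ ((3 : ℝ) / 2) * Real.sqrt (alph - 1)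

/-- The change-of-variable function g (extended evenly to negative arguments):
g(s) = √(1 − k s²) for |s| < (αk)^{−1/2}, and g(s) = 1/(βk s²) + √3/2 for |s| ≥ (αk)^{−1/2}. -/
lemma alph_ge : (15:ℝ)/2 ≤ alph := by
  have h5 : Real.sqrt 5 ^ 2 = 5 := Real.sq_sqrt (by norm_num)
  have h0 := Real.sqrt_nonneg 5
  unfold alph; nlinarith
lemma alph_pos : 0 < alph := lt_of_lt_of_le (by norm_num) alph_ge
lemma alph_sq : alph ^ 2 = 9 * alph - 9 := by
  have h5 : Real.sqrt 5 ^ 2 = 5 := Real.sq_sqrt (by norm_num)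
  unfold alph; linear_combination (9/4) * h5

noncomputable def w : ℝ := Real.sqrt (8 * alph - 9)
lemma w_sq : w ^ 2 = 8 * alph - 9 :=
  Real.sq_sqrt (by nlinarith [alph_ge])
lemma w_ge : (6:ℝ) ≤ w := by
  have h0 := Real.sqrt_nonneg (8 * alph - 9)
  have := w_sq
  have := alph_ge
  unfold w at *; nlinarith
lemma w_pos : 0 < w := lt_of_lt_of_le (by norm_num) w_ge

lemma bet_eq : bet = 2 * alph * w := by
  have h32 : alph ^ ((3:ℝ)/2) = alph * Real.sqrt alph := by
    rw [show (3:ℝ)/2 = 1 + 1/2 by norm_num, Real.rpow_add alph_pos, Real.rpow_one,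
      ← Real.sqrt_eq_rpow]
  rw [bet, h32]
  have : Real.sqrt alph * Real.sqrt (alph - 1) = Real.sqrt (alph * (alph - 1)) :=
    (Real.sqrt_mul alph_pos.le _).symm
  have h2 : alph * (alph - 1) = 8 * alph - 9 := by linear_combination alph_sq
  rw [mul_assoc, mul_assoc, this, h2, w]
  ring

lemma bet_pos : 0 < bet := by rw [bet_eq]; exact mul_pos (mul_pos two_pos alph_pos) w_pos

lemma sqrt3aw : Real.sqrt 3 * (alph * w) = 15 * alph - 18 := by
  have h1 : Real.sqrt 3 * w = Real.sqrt (3 * (8 * alph - 9)) := by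
    rw [Real.sqrt_mul (by norm_num : (0:ℝ) ≤ 3), w]
  have h2 : alph * Real.sqrt (3 * (8 * alph - 9)) = Real.sqrt (alph^2 * (3 * (8 * alph - 9))) := by
    rw [Real.sqrt_mul (sq_nonneg alph) (3 * (8 * alph - 9)), Real.sqrt_sq alph_pos.le]
  have h3 : alph ^ 2 * (3 * (8 * alph - 9)) = (15 * alph - 18)^2 := by
    linear_combination (24 * alph - 36) * alph_sq
  calc Real.sqrt 3 * (alph * w) = alph * (Real.sqrt 3 * w) := by ring
    _ = Real.sqrt ((15 * alph - 18)^2) := by rw [h1, h2, h3]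
    _ = 15 * alph - 18 := Real.sqrt_sq (by nlinarith [alph_ge])

lemma sqrt3_le : Real.sqrt 3 ≤ 7/4 := by
  nlinarith [Real.sq_sqrt (by norm_num : (0:ℝ) ≤ 3), Real.sqrt_nonneg 3]

lemma sqrt3_half : Real.sqrt 3 / 2 = Real.sqrt (3/4) := by
  rw [show (3:ℝ)/4 = 3 / 2^2 by norm_num, Real.sqrt_div' , Real.sqrt_sq]
  all_goals norm_num

lemma sk_pos (k : ℝ) (hk : 0 < k) : 0 < Real.sqrt (alph * k) :=
  Real.sqrt_pos.2 (mul_pos alph_pos hk)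

lemma kr2 (k : ℝ) (hk : 0 < k) : k * (1 / Real.sqrt (alph * k))^2 = 1/alph := by
  have h : Real.sqrt (alph*k)^2 = alph*k := Real.sq_sqrt (mul_pos alph_pos hk).le
  rw [div_pow, one_pow, h]
  field_simp [alph_pos.ne', hk.ne']

lemma sqrt1 : Real.sqrt (1 - 1/alph) = w / alph := by
  have h : 1 - 1/alph = (w/alph)^2 := by
    field_simp [alph_pos.ne']
    linear_combination alph_sq - w_sq
  rw [h, Real.sqrt_sq (div_nonneg w_pos.le alph_pos.le)]

lemma val_match' (k r : ℝ) (hk : 0 < k) (hr : 0 < r) (h2 : k * r^2 = 1/alph) :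
    Real.sqrt (1 - k * r^2) = 1/(bet * k * r^2) + Real.sqrt 3 / 2 := by
  rw [h2, sqrt1, bet_eq, mul_assoc, mul_assoc, ← mul_assoc w k (r^2), mul_comm w k,
    mul_assoc k w (r^2), mul_comm w (r^2), ← mul_assoc k (r^2) w, ← mul_assoc, h2]
  field_simp [alph_pos.ne', w_pos.ne']
  linear_combination -sqrt3aw + 2 * w_sq

lemma deriv_match' (k r : ℝ) (hk : 0 < k) (hr : 0 < r) (h2 : k * r^2 = 1/alph) :
    -(k * r) / Real.sqrt (1 - k * r^2) = -2/(bet * k * r^3) := by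
  have h2m : k * r^2 * alph = 1 := by
    rw [h2]; exact div_mul_cancel₀ 1 alph_pos.ne' |>.trans rfl
  rw [h2, sqrt1, bet_eq]
  rw [div_eq_div_iff (div_pos w_pos alph_pos).ne'
    (by exact (mul_pos (mul_pos (mul_pos (mul_pos two_pos alph_pos) w_pos) hk)
      (pow_pos hr 3)).ne')]
  field_simp [alph_pos.ne']
  linear_combination (-(w*k*r^2*alph) - w) * h2m

noncomputable def g (k s : ℝ) : ℝ :=
  if |s| < 1 / Real.sqrt (alph * k) then Real.sqrt (1 - k * s ^ 2)
  else 1 / (bet * k * s ^ 2) + Real.sqrt 3 / 2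


noncomputable def gd (k s : ℝ) : ℝ :=
  if |s| < 1 / Real.sqrt (alph * k) then -(k * s) / Real.sqrt (1 - k * s ^ 2)
  else -2 / (bet * k * s ^ 3)

lemma r_pos (k : ℝ) (hk : 0 < k) : 0 < 1 / Real.sqrt (alph * k) :=
  one_div_pos.2 (sk_pos k hk)

lemma ks2_le (k s : ℝ) (hk : 0 < k) (hs : |s| ≤ 1 / Real.sqrt (alph * k)) :
    k * s ^ 2 ≤ 1 / alph := by
  have h1 : s ^ 2 ≤ (1 / Real.sqrt (alph * k)) ^ 2 := by
    rw [← sq_abs s]; exact pow_le_pow_left₀ (abs_nonneg s) hs 2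
  calc k * s ^ 2 ≤ k * (1 / Real.sqrt (alph * k)) ^ 2 := by nlinarith
    _ = 1 / alph := kr2 k hk

lemma inv_alph_le : 1 / alph ≤ 2 / 15 := by
  rw [div_le_div_iff₀ alph_pos (by norm_num)]; linarith [alph_ge]

lemma sub_ks2_pos (k s : ℝ) (hk : 0 < k) (hs : |s| ≤ 1 / Real.sqrt (alph * k)) :
    (3:ℝ)/4 ≤ 1 - k * s ^ 2 := by
  have := ks2_le k s hk hs
  have := inv_alph_le
  linarith

lemma g_eq_sqrt (k s : ℝ) (hk : 0 < k) (hs : |s| ≤ 1 / Real.sqrt (alph * k)) :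
    g k s = Real.sqrt (1 - k * s ^ 2) := by
  rcases lt_or_eq_of_le hs with h | h
  · simp only [g, if_pos h]
  · have hs2 : s ^ 2 = (1 / Real.sqrt (alph * k)) ^ 2 := by rw [← sq_abs s, h]
    have hn : ¬ |s| < 1 / Real.sqrt (alph * k) := by rw [h]; exact lt_irrefl _
    unfold g
    rw [if_neg hn, hs2]
    exact (val_match' k (1 / Real.sqrt (alph * k)) hk (r_pos k hk) (kr2 k hk)).symm

lemma g_eq_out (k s : ℝ) (hs : ¬ |s| < 1 / Real.sqrt (alph * k)) :
    g k s = 1 / (bet * k * s ^ 2) + Real.sqrt 3 / 2 := by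
  simp only [g, if_neg hs]

lemma g_ge (k s : ℝ) (hk : 0 < k) : Real.sqrt 3 / 2 ≤ g k s := by
  unfold g; split_ifs with h
  · calc Real.sqrt 3 / 2 = Real.sqrt (3/4) := sqrt3_half
      _ ≤ Real.sqrt (1 - k * s ^ 2) := Real.sqrt_le_sqrt (sub_ks2_pos k s hk h.le)
  · push_neg at h
    have hs : s ≠ 0 := by
      intro h0
      rw [h0, abs_zero] at h
      exact absurd (r_pos k hk) (not_lt.2 h)
    have h2 : 0 < 1 / (bet * k * s ^ 2) :=
      one_div_pos.2 (mul_pos (mul_pos bet_pos hk) (pow_pos (abs_pos.2 hs) 2 |>.trans_eq (sq_abs s)))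
    linarith

lemma g_pos (k s : ℝ) (hk : 0 < k) : 0 < g k s :=
  lt_of_lt_of_le (by positivity) (g_ge k s hk)

lemma g_le_one (k s : ℝ) (hk : 0 < k) : g k s ≤ 1 := by
  unfold g; split_ifs with h
  · exact sqrt_le_one.2 (by nlinarith)
  · push_neg at h
    have hrpos := r_pos k hk
    have hs2 : (1 / Real.sqrt (alph * k)) ^ 2 ≤ s ^ 2 := by
      rw [← sq_abs s]; exact pow_le_pow_left₀ hrpos.le h 2
    have hpos : 0 < bet * k * (1 / Real.sqrt (alph * k)) ^ 2 :=
      mul_pos (mul_pos bet_pos hk) (pow_pos hrpos 2)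
    have h1 : 1 / (bet * k * s ^ 2) ≤ 1 / (bet * k * (1 / Real.sqrt (alph * k)) ^ 2) :=
      one_div_le_one_div_of_le hpos (by nlinarith [mul_pos bet_pos hk])
    have h2 : bet * k * (1 / Real.sqrt (alph * k)) ^ 2 = 2 * w := by
      rw [mul_assoc, kr2 k hk, bet_eq]
      field_simp [alph_pos.ne']
    rw [h2] at h1
    have h3 : 1 / (2 * w) ≤ 1 / 12 :=
      one_div_le_one_div_of_le (by norm_num) (by linarith [w_ge])
    linarith [sqrt3_le]

lemma f1_hasDerivAt (k x : ℝ) (hne : 1 - k * x ^ 2 ≠ 0) :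
    HasDerivAt (fun y => Real.sqrt (1 - k * y ^ 2))
      (-(k * x) / Real.sqrt (1 - k * x ^ 2)) x := by
  have hu : HasDerivAt (fun y : ℝ => 1 - k * y ^ 2) (-(k * (2 * x))) x := by
    simpa using (((hasDerivAt_pow 2 x).const_mul k).const_sub 1)
  have := hu.sqrt hne
  convert this using 1
  rcases eq_or_ne (Real.sqrt (1 - k * x ^ 2)) 0 with h | h
  · simp [h]
  · field_simp

lemma f2_hasDerivAt (k x : ℝ) (hk : 0 < k) (hx : x ≠ 0) :
    HasDerivAt (fun y => 1 / (bet * k * y ^ 2) + Real.sqrt 3 / 2)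
      (-2 / (bet * k * x ^ 3)) x := by
  have hc : HasDerivAt (fun y : ℝ => bet * k * y ^ 2) (bet * k * (2 * x)) x := by
    simpa using ((hasDerivAt_pow 2 x).const_mul (bet * k))
  have hcx : bet * k * x ^ 2 ≠ 0 := by
    have := bet_pos; positivity
  have := (hc.inv hcx).add_const (Real.sqrt 3 / 2)
  have heq : -(bet * k * (2 * x)) / (bet * k * x ^ 2) ^ 2 = -2 / (bet * k * x ^ 3) := by
    field_simp [bet_pos.ne', hk.ne', hx]
  simp only [one_div]
  exact heq ▸ this

lemma g_hasDerivAt (k s : ℝ) (hk : 0 < k) : HasDerivAt (g k) (gd k s) s := by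
  have hrpos : 0 < 1 / Real.sqrt (alph * k) := r_pos k hk
  rcases lt_trichotomy |s| (1 / Real.sqrt (alph * k)) with hlt | heq | hgt
  · have hne : 1 - k * s ^ 2 ≠ 0 := by linarith [sub_ks2_pos k s hk hlt.le]
    have hev : ∀ᶠ x in nhds s, g k x = Real.sqrt (1 - k * x ^ 2) := by
      have hop : IsOpen {x : ℝ | |x| < 1 / Real.sqrt (alph * k)} :=
        isOpen_lt continuous_abs continuous_const
      filter_upwards [hop.mem_nhds hlt] with x hx
      simp only [g, if_pos hx]
    have h1 := (f1_hasDerivAt k s hne).congr_of_eventuallyEq hev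
    simpa only [gd, if_pos hlt] using h1
  · have hne : 1 - k * s ^ 2 ≠ 0 := by linarith [sub_ks2_pos k s hk heq.le]
    rcases (abs_eq hrpos.le).1 heq with h | h
    · subst h
      have habs : |1 / Real.sqrt (alph * k)| = 1 / Real.sqrt (alph * k) := abs_of_pos hrpos
      have hnlt : ¬ |1 / Real.sqrt (alph * k)| < 1 / Real.sqrt (alph * k) := by
        rw [habs]; exact lt_irrefl _
      -- left piece (Iic)
      have hd1 := (f1_hasDerivAt k (1 / Real.sqrt (alph * k)) hne).hasDerivWithinAt
        (s := Iic (1 / Real.sqrt (alph * k)))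
      have hevL : ∀ᶠ x in nhdsWithin (1 / Real.sqrt (alph * k)) (Iic (1 / Real.sqrt (alph * k))),
          g k x = Real.sqrt (1 - k * x ^ 2) := by
        filter_upwards [eventually_mem_nhdsWithin,
          (eventually_gt_nhds (by linarith :
            -(1 / Real.sqrt (alph * k)) < 1 / Real.sqrt (alph * k))).filter_mono
            nhdsWithin_le_nhds] with x hx1 hx2
        exact g_eq_sqrt k x hk (abs_le.2 ⟨hx2.le, hx1⟩)
      have hL := hd1.congr_of_eventuallyEq hevL (g_eq_sqrt k _ hk (le_of_eq habs))
      rw [deriv_match' k (1 / Real.sqrt (alph * k)) hk hrpos (kr2 k hk)] at hL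
      -- right piece (Ici)
      have hd2 := (f2_hasDerivAt k (1 / Real.sqrt (alph * k)) hk hrpos.ne').hasDerivWithinAt
        (s := Ici (1 / Real.sqrt (alph * k)))
      have hR := hd2.congr
        (fun x hx => g_eq_out k x (not_lt.2 (le_trans hx (le_abs_self x))))
        (g_eq_out k _ hnlt)
      have hu := hL.union hR
      rw [Iic_union_Ici] at hu
      have := hasDerivWithinAt_univ.1 hu
      simpa only [gd, if_neg hnlt] using this
    · subst h
      have habs : |-(1 / Real.sqrt (alph * k))| = 1 / Real.sqrt (alph * k) := by
        rw [abs_neg]; exact abs_of_pos hrpos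
      have hnlt : ¬ |-(1 / Real.sqrt (alph * k))| < 1 / Real.sqrt (alph * k) := by
        rw [habs]; exact lt_irrefl _
      -- right piece (Ici (-r)) : sqrt piece
      have hd1 := (f1_hasDerivAt k (-(1 / Real.sqrt (alph * k))) hne).hasDerivWithinAt
        (s := Ici (-(1 / Real.sqrt (alph * k))))
      have hevR : ∀ᶠ x in nhdsWithin (-(1 / Real.sqrt (alph * k)))
          (Ici (-(1 / Real.sqrt (alph * k)))),
          g k x = Real.sqrt (1 - k * x ^ 2) := by
        filter_upwards [eventually_mem_nhdsWithin,
          (eventually_lt_nhds (by linarith :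
            -(1 / Real.sqrt (alph * k)) < 1 / Real.sqrt (alph * k))).filter_mono
            nhdsWithin_le_nhds] with x hx1 hx2
        exact g_eq_sqrt k x hk (abs_le.2 ⟨hx1, hx2.le⟩)
      have hR := hd1.congr_of_eventuallyEq hevR (g_eq_sqrt k _ hk (le_of_eq habs))
      have hval : -(k * -(1 / Real.sqrt (alph * k))) /
            Real.sqrt (1 - k * (-(1 / Real.sqrt (alph * k))) ^ 2)
          = -2 / (bet * k * (-(1 / Real.sqrt (alph * k))) ^ 3) := by
        have hdm := deriv_match' k (1 / Real.sqrt (alph * k)) hk hrpos (kr2 k hk)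
        have e2 : (-(1 / Real.sqrt (alph * k))) ^ 2 = (1 / Real.sqrt (alph * k)) ^ 2 := by ring
        rw [e2]
        have h1 : -(k * -(1 / Real.sqrt (alph * k))) /
            Real.sqrt (1 - k * (1 / Real.sqrt (alph * k)) ^ 2)
            = -(-(k * (1 / Real.sqrt (alph * k))) /
              Real.sqrt (1 - k * (1 / Real.sqrt (alph * k)) ^ 2)) := by ring
        have h2 : -2 / (bet * k * (-(1 / Real.sqrt (alph * k))) ^ 3)
            = -(-2 / (bet * k * (1 / Real.sqrt (alph * k)) ^ 3)) := by ring
        rw [h1, h2, hdm]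
      rw [hval] at hR
      -- left piece (Iic (-r)) : outer piece
      have hd2 := (f2_hasDerivAt k (-(1 / Real.sqrt (alph * k))) hk
        (neg_ne_zero.2 hrpos.ne')).hasDerivWithinAt
        (s := Iic (-(1 / Real.sqrt (alph * k))))
      have hL := hd2.congr
        (fun x hx => g_eq_out k x (not_lt.2 (le_trans (by linarith [mem_Iic.1 hx] :
          1 / Real.sqrt (alph * k) ≤ -x) (neg_le_abs x))))
        (g_eq_out k _ hnlt)
      have hu := hL.union hR
      rw [Iic_union_Ici] at hu
      have := hasDerivWithinAt_univ.1 hu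
      simpa only [gd, if_neg hnlt] using this
  · have hs : s ≠ 0 := by
      intro h0; rw [h0, abs_zero] at hgt; linarith
    have hev : ∀ᶠ x in nhds s, g k x = 1 / (bet * k * x ^ 2) + Real.sqrt 3 / 2 := by
      have hop : IsOpen {x : ℝ | 1 / Real.sqrt (alph * k) < |x|} :=
        isOpen_lt continuous_const continuous_abs
      filter_upwards [hop.mem_nhds hgt] with x hx
      exact g_eq_out k x (not_lt.2 hx.le)
    have h2 := (f2_hasDerivAt k s hk hs).congr_of_eventuallyEq hev
    simpa only [gd, if_neg (not_lt.2 hgt.le)] using h2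

lemma g_deriv (k s : ℝ) (hk : 0 < k) : deriv (g k) s = gd k s :=
  (g_hasDerivAt k s hk).deriv

lemma g_cont (k : ℝ) (hk : 0 < k) : Continuous (g k) :=
  continuous_iff_continuousAt.2 fun s => (g_hasDerivAt k s hk).continuousAt

lemma s_gd_nonpos (k s : ℝ) (hk : 0 < k) : s * gd k s ≤ 0 := by
  unfold gd; split_ifs with h
  · have h1 : s * (-(k * s) / Real.sqrt (1 - k * s ^ 2)) = -(k * s ^ 2 / Real.sqrt (1 - k * s ^ 2)) := by
      ring
    rw [h1, neg_nonpos]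
    positivity
  · push_neg at h
    have hs : s ≠ 0 := by
      intro h0; rw [h0, abs_zero] at h; linarith [r_pos k hk]
    have h1 : s * (-2 / (bet * k * s ^ 3)) = -(2 / (bet * k * s ^ 2)) := by
      field_simp [hs, bet_pos.ne', hk.ne']
    rw [h1, neg_nonpos]
    have := bet_pos
    positivity

/-- G(t) = ∫₀ᵗ g(s) ds. -/
noncomputable def G (k t : ℝ) : ℝ := ∫ s in (0 : ℝ)..t, g k s



lemma G_hasDerivAt (k t : ℝ) (hk : 0 < k) : HasDerivAt (G k) (g k t) t :=
  intervalIntegral.integral_hasDerivAt_right ((g_cont k hk).intervalIntegrable 0 t)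
    ((g_cont k hk).stronglyMeasurableAtFilter _ _)
    (g_cont k hk).continuousAt

lemma G_strictMono (k : ℝ) (hk : 0 < k) : StrictMono (G k) :=
  strictMono_of_deriv_pos fun t => by
    rw [(G_hasDerivAt k t hk).deriv]; exact g_pos k t hk


/-- h(s) = G⁻¹(s)/g(G⁻¹(s)) is differentiable with
h'(s) = (1 − G⁻¹(s)g'(G⁻¹(s))/g(G⁻¹(s)))/g(G⁻¹(s))² > 0, hence strictly increasing;
and for every C > 0 there is η > 0 with (h(a) − h(b))(a − b) ≥ η(a − b)² for |a|,|b| ≤ C. -/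
theorem stmt12 (k : ℝ) (hk : 0 < k) (Ginv : ℝ → ℝ)
    (hL : Function.LeftInverse Ginv (G k)) (hR : Function.RightInverse Ginv (G k)) :
    (∀ s : ℝ, HasDerivAt (fun v : ℝ => Ginv v / g k (Ginv v))
      ((1 - Ginv s * deriv (g k) (Ginv s) / g k (Ginv s)) / (g k (Ginv s)) ^ 2) s) ∧
    (∀ s : ℝ, 0 < (1 - Ginv s * deriv (g k) (Ginv s) / g k (Ginv s)) / (g k (Ginv s)) ^ 2) ∧
    StrictMono (fun v : ℝ => Ginv v / g k (Ginv v)) ∧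
    (∀ C : ℝ, 0 < C → ∃ η : ℝ, 0 < η ∧ ∀ a b : ℝ, |a| ≤ C → |b| ≤ C →
      η * (a - b) ^ 2 ≤ (Ginv a / g k (Ginv a) - Ginv b / g k (Ginv b)) * (a - b)) := by
  have hgpos : ∀ x, 0 < g k x := fun x => g_pos k x hk
  have hGmono := G_strictMono k hk
  have hGinvMono : StrictMono Ginv := fun a b hab => by
    have h := hGmono.lt_iff_lt (a := Ginv a) (b := Ginv b)
    rw [hR a, hR b] at h
    exact h.1 hab
  have hGinvSurj : Function.Surjective Ginv := fun x => ⟨G k x, hL x⟩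
  have hGinvCont : Continuous Ginv :=
    (StrictMono.orderIsoOfSurjective Ginv hGinvMono hGinvSurj).continuous
  have hGinvDeriv : ∀ s, HasDerivAt Ginv (g k (Ginv s))⁻¹ s := fun s =>
    HasDerivAt.of_local_left_inverse hGinvCont.continuousAt (G_hasDerivAt k (Ginv s) hk)
      (hgpos _).ne' (Filter.Eventually.of_forall hR)
  have hhd : ∀ s : ℝ, HasDerivAt (fun v : ℝ => Ginv v / g k (Ginv v))
      ((1 - Ginv s * deriv (g k) (Ginv s) / g k (Ginv s)) / (g k (Ginv s)) ^ 2) s := by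
    intro s
    have hu := hGinvDeriv s
    have hv : HasDerivAt (fun v => g k (Ginv v)) (gd k (Ginv s) * (g k (Ginv s))⁻¹) s :=
      (g_hasDerivAt k (Ginv s) hk).comp s hu
    have hdiv : HasDerivAt (fun v => Ginv v / g k (Ginv v)) _ s := hu.div hv (hgpos _).ne'
    convert hdiv using 1
    rw [g_deriv k (Ginv s) hk]
    field_simp [(hgpos (Ginv s)).ne']
  have hnonpos : ∀ s : ℝ, Ginv s * deriv (g k) (Ginv s) / g k (Ginv s) ≤ 0 := by
    intro s
    apply div_nonpos_of_nonpos_of_nonneg _ (hgpos _).le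
    rw [g_deriv k _ hk]
    exact s_gd_nonpos k _ hk
  have hpos : ∀ s : ℝ, 0 < (1 - Ginv s * deriv (g k) (Ginv s) / g k (Ginv s)) /
      (g k (Ginv s)) ^ 2 := by
    intro s
    exact div_pos (by linarith [hnonpos s]) (pow_pos (hgpos _) 2)
  have hge1 : ∀ s : ℝ, 1 ≤ (1 - Ginv s * deriv (g k) (Ginv s) / g k (Ginv s)) /
      (g k (Ginv s)) ^ 2 := by
    intro s
    rw [le_div_iff₀ (pow_pos (hgpos _) 2)]
    have hle : (g k (Ginv s)) ^ 2 ≤ 1 := by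
      nlinarith [g_le_one k (Ginv s) hk, (hgpos (Ginv s)).le]
    nlinarith [hnonpos s]
  refine ⟨hhd, hpos, strictMono_of_deriv_pos fun s => by rw [(hhd s).deriv]; exact hpos s,
    fun C hC => ⟨1, one_pos, fun a b _ _ => ?_⟩⟩
  have hφd : ∀ s : ℝ, HasDerivAt
      (fun v : ℝ => Ginv v / g k (Ginv v) - v)
      ((1 - Ginv s * deriv (g k) (Ginv s) / g k (Ginv s)) / (g k (Ginv s)) ^ 2 - 1) s :=
    fun s => (hhd s).sub (hasDerivAt_id s)
  have hφmono : Monotone (fun v : ℝ => Ginv v / g k (Ginv v) - v) :=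
    monotone_of_deriv_nonneg (fun s => (hφd s).differentiableAt)
      (fun s => by rw [(hφd s).deriv]; linarith [hge1 s])
  rcases le_total b a with hab | hab
  · have h1 := hφmono hab
    simp only at h1
    have key : (Ginv a / g k (Ginv a) - Ginv b / g k (Ginv b) - (a - b)) * (a - b) ≥ 0 :=
      mul_nonneg (by linarith) (by linarith)
    nlinarith [key]
  · have h1 := hφmono hab
    simp only at h1
    have key : (Ginv b / g k (Ginv b) - Ginv a / g k (Ginv a) - (b - a)) * (b - a) ≥ 0 :=
      mul_nonneg (by linarith) (by linarith)
    nlinarith [key]
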